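/- arXiv:2105.12389 — 2 statements merged into one kernel-verified Lean document; each statement's English description precedes it below -/
import Mathlib

section
/- Let Û* be an optimal solution of min over U ∈ S^d_+ of J(U), let U_r be a feasible solution of the rank-constrained problem (i.e., U_r ∈ S^d_+ with ⟨U_r,I⟩ − ‖U_r‖_(r) = 0), and let ε > 0. If the penalty parameter c satisfies (J(U_r) − J(Û*))/c ≤ ε, then any global minimizer U*_c of J(U) + c(⟨U,I⟩ − ‖U‖_(r)) over S^d_+ satisfies ⟨U*_c, I⟩ − ‖U*_c‖_(r) ≤ ε and J(U*_c) ≤ J(U*) where U* is a global optimal solution of the rank-constrained problem. -/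
open Matrix

noncomputable def kyFan {d : ℕ} (r : ℕ) (U : Matrix (Fin d) (Fin d) ℝ) : ℝ :=
  if hU : U.IsHermitian then
    sSup {x | ∃ s : Finset (Fin d), s.card = r ∧ x = ∑ i ∈ s, |hU.eigenvalues i|}
  else 0

lemma trace_eq_sum_eig {d : ℕ} {U : Matrix (Fin d) (Fin d) ℝ} (hU : U.IsHermitian) :
    U.trace = ∑ i, hU.eigenvalues i := by
  conv_lhs => rw [hU.spectral_theorem]
  rw [Unitary.conjStarAlgAut_apply]
  rw [Matrix.trace_mul_cycle]
  rw [(Matrix.mem_unitaryGroup_iff').mp (hU.eigenvectorUnitary).2, one_mul, Matrix.trace_diagonal]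
  simp

lemma kyFan_le_trace {d r : ℕ} {U : Matrix (Fin d) (Fin d) ℝ} (hU : U.PosSemidef) :
    kyFan r U ≤ U.trace := by
  rw [kyFan, dif_pos hU.1]
  apply Real.sSup_le
  · rintro x ⟨s, hs, rfl⟩
    rw [trace_eq_sum_eig hU.1]
    calc ∑ i ∈ s, |hU.1.eigenvalues i| = ∑ i ∈ s, hU.1.eigenvalues i := by
          refine Finset.sum_congr rfl fun i _ => abs_of_nonneg (hU.eigenvalues_nonneg i)
      _ ≤ ∑ i, hU.1.eigenvalues i :=
          Finset.sum_le_sum_of_subset_of_nonneg (Finset.subset_univ s)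
            (fun i _ _ => hU.eigenvalues_nonneg i)
  · rw [trace_eq_sum_eig hU.1]
    exact Finset.sum_nonneg fun i _ => hU.eigenvalues_nonneg i

/-- Exact penalty bound: if `(J(U_r) - J(Û*))/c ≤ ε`, then any global minimizer `U*_c` of
the penalized problem satisfies `⟨U*_c,I⟩ - ‖U*_c‖_(r) ≤ ε` and `J(U*_c) ≤ J(U*)`. -/
theorem stmt5 {d r : ℕ} (J : Matrix (Fin d) (Fin d) ℝ → ℝ)
    (ε c : ℝ) (hε : 0 < ε) (hc : 0 < c)
    (Uhat : Matrix (Fin d) (Fin d) ℝ) (hUhat : Uhat.PosSemidef)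
    (hUhatmin : ∀ V : Matrix (Fin d) (Fin d) ℝ, V.PosSemidef → J Uhat ≤ J V)
    (Ur : Matrix (Fin d) (Fin d) ℝ) (hUr : Ur.PosSemidef)
    (hUrfeas : Ur.trace - kyFan r Ur = 0)
    (hcchoice : (J Ur - J Uhat) / c ≤ ε)
    (Uc : Matrix (Fin d) (Fin d) ℝ) (hUcpsd : Uc.PosSemidef)
    (hUcmin : ∀ V : Matrix (Fin d) (Fin d) ℝ, V.PosSemidef →
      J Uc + c * (Uc.trace - kyFan r Uc) ≤ J V + c * (V.trace - kyFan r V))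
    (Ustar : Matrix (Fin d) (Fin d) ℝ) (hUstarpsd : Ustar.PosSemidef)
    (hUstarfeas : Ustar.trace - kyFan r Ustar = 0)
    (hUstarmin : ∀ V : Matrix (Fin d) (Fin d) ℝ, V.PosSemidef →
      V.trace - kyFan r V = 0 → J Ustar ≤ J V) :
    Uc.trace - kyFan r Uc ≤ ε ∧ J Uc ≤ J Ustar := by
  have hpen : 0 ≤ Uc.trace - kyFan r Uc := sub_nonneg.mpr (kyFan_le_trace hUcpsd)
  constructor
  · have h1 := hUcmin Ur hUr
    rw [hUrfeas, mul_zero, add_zero] at h1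
    have h2 := hUhatmin Uc hUcpsd
    have h3 : c * (Uc.trace - kyFan r Uc) ≤ J Ur - J Uhat := by linarith
    rw [div_le_iff₀ hc] at hcchoice
    have := mul_le_mul_of_nonneg_left hpen (le_of_lt hc)
    nlinarith [mul_pos hc hε]
  · have h1 := hUcmin Ustar hUstarpsd
    rw [hUstarfeas, mul_zero, add_zero] at h1
    nlinarith
end

section
/- Let f₁, f₂ : S^d → ℝ with f₂ convex, let α > 0, 0 < κ < 1, and suppose U^{k+1} minimizes f₁(U) − ⟨U, W^k⟩ + δ_{S^d_+}(U) + (α/2)‖U − U^k‖_F² − ⟨Δ^{k+1}, U⟩ over S^d with W^k ∈ ∂f₂(U^k), U^k ∈ S^d_+, and ‖Δ^{k+1}‖_F ≤ ((1−κ)α/2)‖U^{k+1} − U^k‖_F. Then (κα/2)‖U^{k+1} − U^k‖_F² ≤ [f₁(U^k) − f₂(U^k)] − [f₁(U^{k+1}) − f₂(U^{k+1})]. -/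
open Matrix

noncomputable def frobInner {d m : ℕ} (A B : Matrix (Fin d) (Fin m) ℝ) : ℝ :=
  ∑ i, ∑ j, A i j * B i j

noncomputable def frobNorm {d m : ℕ} (A : Matrix (Fin d) (Fin m) ℝ) : ℝ :=
  Real.sqrt (∑ i, ∑ j, (A i j) ^ 2)

lemma frobNorm_nonneg {d m : ℕ} (A : Matrix (Fin d) (Fin m) ℝ) : 0 ≤ frobNorm A :=
  Real.sqrt_nonneg _

lemma frob_cauchy {d m : ℕ} (A B : Matrix (Fin d) (Fin m) ℝ) :
    frobInner A B ≤ frobNorm A * frobNorm B := by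
  have key : (∑ p : Fin d × Fin m, A p.1 p.2 * B p.1 p.2) ^ 2 ≤
      (∑ p : Fin d × Fin m, (A p.1 p.2) ^ 2) * ∑ p : Fin d × Fin m, (B p.1 p.2) ^ 2 :=
    Finset.sum_mul_sq_le_sq_mul_sq _ _ _
  have hA : frobInner A B = ∑ p : Fin d × Fin m, A p.1 p.2 * B p.1 p.2 := by
    rw [frobInner, Fintype.sum_prod_type]
  have hN : frobNorm A * frobNorm B =
      Real.sqrt ((∑ p : Fin d × Fin m, (A p.1 p.2) ^ 2) * ∑ p : Fin d × Fin m, (B p.1 p.2) ^ 2) := by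
    rw [Real.sqrt_mul (Finset.sum_nonneg fun _ _ => sq_nonneg _)]
    rw [frobNorm, frobNorm, Fintype.sum_prod_type, Fintype.sum_prod_type]
  rw [hA, hN]
  calc (∑ p : Fin d × Fin m, A p.1 p.2 * B p.1 p.2)
      ≤ |∑ p : Fin d × Fin m, A p.1 p.2 * B p.1 p.2| := le_abs_self _
    _ = Real.sqrt ((∑ p : Fin d × Fin m, A p.1 p.2 * B p.1 p.2) ^ 2) := by
        rw [Real.sqrt_sq_eq_abs]
    _ ≤ _ := Real.sqrt_le_sqrt key

lemma frobInner_sub_right {d m : ℕ} (A B C : Matrix (Fin d) (Fin m) ℝ) :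
    frobInner A (B - C) = frobInner A B - frobInner A C := by
  simp [frobInner, Matrix.sub_apply, mul_sub, Finset.sum_sub_distrib]

/-- Sufficient descent for the inexact proximal DC step: if `U^{k+1}` minimizes the
inexact proximal subproblem over the PSD cone, `W^k ∈ ∂f₂(U^k)` and the inexact term
satisfies `‖Δ^{k+1}‖_F ≤ ((1-κ)α/2)‖U^{k+1} - U^k‖_F`, then
`(κα/2)‖U^{k+1} - U^k‖_F² ≤ (f₁(U^k) - f₂(U^k)) - (f₁(U^{k+1}) - f₂(U^{k+1}))`. -/
theorem stmt8 {d : ℕ} (f₁ f₂ : Matrix (Fin d) (Fin d) ℝ → ℝ)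
    (hf₂ : ConvexOn ℝ Set.univ f₂)
    (α κ : ℝ) (hα : 0 < α) (hκ0 : 0 < κ) (hκ1 : κ < 1)
    (Uk Uk1 Wk Δ : Matrix (Fin d) (Fin d) ℝ)
    (hUk : Uk.PosSemidef) (hUk1 : Uk1.PosSemidef)
    (hWk : ∀ V : Matrix (Fin d) (Fin d) ℝ, f₂ V ≥ f₂ Uk + frobInner Wk (V - Uk))
    (hmin : ∀ V : Matrix (Fin d) (Fin d) ℝ, V.PosSemidef →
      f₁ Uk1 - frobInner Uk1 Wk + α / 2 * frobNorm (Uk1 - Uk) ^ 2 - frobInner Δ Uk1 ≤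
        f₁ V - frobInner V Wk + α / 2 * frobNorm (V - Uk) ^ 2 - frobInner Δ V)
    (hΔ : frobNorm Δ ≤ (1 - κ) * α / 2 * frobNorm (Uk1 - Uk)) :
    κ * α / 2 * frobNorm (Uk1 - Uk) ^ 2 ≤ (f₁ Uk - f₂ Uk) - (f₁ Uk1 - f₂ Uk1) := by
  have h1 := hmin Uk hUk
  have hzero : frobNorm (Uk - Uk : Matrix (Fin d) (Fin d) ℝ) = 0 := by
    simp [frobNorm, Matrix.sub_apply]
  rw [hzero] at h1
  have hsub : frobInner Wk (Uk1 - Uk) ≤ f₂ Uk1 - f₂ Uk := by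
    have := hWk Uk1; linarith
  have hcomm : frobInner Wk (Uk1 - Uk) = frobInner Uk1 Wk - frobInner Uk Wk := by
    rw [frobInner_sub_right]
    simp [frobInner, mul_comm, Finset.sum_sub_distrib]
  have hcs : frobInner Δ Uk1 - frobInner Δ Uk ≤
      (1 - κ) * α / 2 * frobNorm (Uk1 - Uk) ^ 2 := by
    have h := frob_cauchy Δ (Uk1 - Uk)
    rw [frobInner_sub_right] at h
    have hmul : frobNorm Δ * frobNorm (Uk1 - Uk) ≤
        (1 - κ) * α / 2 * frobNorm (Uk1 - Uk) * frobNorm (Uk1 - Uk) :=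
      mul_le_mul_of_nonneg_right hΔ (frobNorm_nonneg _)
    nlinarith [frobNorm_nonneg (Uk1 - Uk)]
  nlinarith [sq_nonneg (frobNorm (Uk1 - Uk))]
end
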